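/- Let E be a real normed vector space, U ⊆ E an open set, ω a C¹ one-form on U that vanishes nowhere (ω(x) ≠ 0 for all x ∈ U), f : U → ℝ a C² function and λ : U → ℝ a function with λ(x) ≠ 0 for all x ∈ U, such that Df(x) = λ(x) • ω(x) for all x ∈ U (Euler's multiplier). Then ω satisfies the integrability condition ω ∧ dω = 0 on U, i.e. for all x ∈ U and all u, v, w ∈ E: ω(x)(u)·dω(x)(v,w) − ω(x)(v)·dω(x)(u,w) + ω(x)(w)·dω(x)(u,v) = 0. -/

import Mathlib

/-- If `f` is a C² function, `ω` a nowhere vanishing C¹ one-form on an open set `U`,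
and `λ` a nowhere vanishing Euler multiplier with `Df = λ • ω` on `U`, then `ω`
satisfies the integrability condition `ω ∧ dω = 0` on `U`. -/
theorem euler_multiplier_implies_integrability
    {E : Type*} [NormedAddCommGroup E] [NormedSpace ℝ E]
    (U : Set E) (hU : IsOpen U)
    (ω : E → (E →L[ℝ] ℝ)) (hω : ContDiffOn ℝ 1 ω U)
    (hωne : ∀ x ∈ U, ω x ≠ 0)
    (f : E → ℝ) (hf : ContDiffOn ℝ 2 f U)
    (lam : E → ℝ) (hlam : ∀ x ∈ U, lam x ≠ 0)
    (heuler : ∀ x ∈ U, fderiv ℝ f x = lam x • ω x) :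
    ∀ x ∈ U, ∀ u v w : E,
      ω x u * ((fderiv ℝ ω x v) w - (fderiv ℝ ω x w) v)
        - ω x v * ((fderiv ℝ ω x u) w - (fderiv ℝ ω x w) u)
        + ω x w * ((fderiv ℝ ω x u) v - (fderiv ℝ ω x v) u) = 0 := by
  intro x hx u v w
  -- choose e with ω x e ≠ 0
  obtain ⟨e, he⟩ : ∃ e, ω x e ≠ 0 := by
    by_contra h
    push_neg at h
    exact hωne x hx (ContinuousLinearMap.ext h)
  -- evaluation map
  have hωcont : ContinuousOn (fun y => ω y e) U :=
    ((ContinuousLinearMap.apply ℝ ℝ e).continuous.comp_continuousOn hω.continuousOn)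
  -- the open neighborhood V of x where ω y e ≠ 0
  set V : Set E := U ∩ (fun y => ω y e) ⁻¹' {(0:ℝ)}ᶜ with hVdef
  have hVopen : IsOpen V := hωcont.isOpen_inter_preimage hU isOpen_compl_singleton
  have hxV : x ∈ V := ⟨hx, by simpa using he⟩
  have hVU : V ⊆ U := Set.inter_subset_left
  have hVmem : V ∈ nhds x := hVopen.mem_nhds hxV
  -- the multiplier as an explicit function
  set μ : E → ℝ := fun y => fderiv ℝ f y e / ω y e with hμdef
  have hμlam : ∀ y ∈ V, μ y = lam y := by
    intro y hy
    have h1 : (ω y) e ≠ 0 := by simpa using hy.2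
    have h2 : fderiv ℝ f y e = lam y * ω y e := by
      rw [heuler y (hVU hy)]; simp
    simp only [hμdef, h2]
    field_simp
  have hgV : ∀ y ∈ V, fderiv ℝ f y = μ y • ω y := by
    intro y hy
    rw [hμlam y hy]
    exact heuler y (hVU hy)
  -- differentiability facts at x
  have hfd : ContDiffOn ℝ 1 (fun y => fderiv ℝ f y) U :=
    hf.fderiv_of_isOpen hU (by norm_num)
  have hfdx : DifferentiableAt ℝ (fun y => fderiv ℝ f y) x :=
    (hfd.differentiableOn one_ne_zero).differentiableAt (hU.mem_nhds hx)
  have hωx : DifferentiableAt ℝ ω x :=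
    (hω.differentiableOn one_ne_zero).differentiableAt (hU.mem_nhds hx)
  have hnum : DifferentiableAt ℝ (fun y => fderiv ℝ f y e) x :=
    ((ContinuousLinearMap.apply ℝ ℝ e).differentiableAt).comp x hfdx
  have hden : DifferentiableAt ℝ (fun y => ω y e) x :=
    ((ContinuousLinearMap.apply ℝ ℝ e).differentiableAt).comp x hωx
  have hμx : DifferentiableAt ℝ μ x := by
    have hre : μ = fun y => fderiv ℝ f y e * (ω y e)⁻¹ := by
      funext y; simp only [hμdef]; rw [div_eq_mul_inv]
    rw [hre]
    exact hnum.mul (hden.inv he)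
  -- second derivative of f at x
  set ω' : E →L[ℝ] (E →L[ℝ] ℝ) := fderiv ℝ ω x with hω'def
  set μ' : E →L[ℝ] ℝ := fderiv ℝ μ x with hμ'def
  set G : E →L[ℝ] (E →L[ℝ] ℝ) := μ x • ω' + μ'.smulRight (ω x) with hGdef
  have hG : HasFDerivAt (fun y => μ y • ω y) G x :=
    hμx.hasFDerivAt.smul hωx.hasFDerivAt
  have hG' : HasFDerivAt (fun y => fderiv ℝ f y) G x := by
    apply hG.congr_of_eventuallyEq
    filter_upwards [hVmem] with y hy using hgV y hy
  have hev : ∀ᶠ y in nhds x, HasFDerivAt f (fderiv ℝ f y) y := by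
    filter_upwards [hU.mem_nhds hx] with y hy
    exact ((hf.differentiableOn (by norm_num)).differentiableAt
      (hU.mem_nhds hy)).hasFDerivAt
  have hsymm : ∀ a b : E, G a b = G b a := fun a b =>
    second_derivative_symmetric_of_eventually hev hG' a b
  -- key identity
  have key : ∀ a b : E, μ x * (ω' a b - ω' b a) = μ' b * ω x a - μ' a * ω x b := by
    intro a b
    have h := hsymm a b
    simp only [hGdef, ContinuousLinearMap.add_apply, ContinuousLinearMap.smul_apply,
      ContinuousLinearMap.smulRight_apply, smul_eq_mul] at h
    ring_nf
    ring_nf at h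
    linarith
  have hμne : μ x ≠ 0 := by
    rw [hμlam x hxV]; exact hlam x hx
  have h1 := key v w
  have h2 := key u w
  have h3 := key u v
  have hA : μ x * (ω x u * ((ω') v w - (ω') w v)
        - ω x v * ((ω') u w - (ω') w u)
        + ω x w * ((ω') u v - (ω') v u)) = 0 := by
    linear_combination ω x u * h1 - ω x v * h2 + ω x w * h3
  have := (mul_eq_zero.mp hA).resolve_left hμne
  simpa [hω'def] using this
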